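/- The function H_2(y) = h_2^{-1}(y)/y is strictly increasing for y > 1, where h_2(x) = x·coth(x) maps (0, ∞) bijectively onto (1, ∞). -/

import Mathlib

open Real

lemma h2_hasDerivAt {x : ℝ} (hx : 0 < x) :
    HasDerivAt (fun x => x * (Real.cosh x / Real.sinh x))
      (Real.cosh x / Real.sinh x + x * ((Real.sinh x * Real.sinh x - Real.cosh x * Real.cosh x) / (Real.sinh x)^2)) x := by
  have hs : Real.sinh x ≠ 0 := ne_of_gt (by simpa using Real.sinh_pos_iff.2 hx)
  have h1 : HasDerivAt Real.cosh (Real.sinh x) x := Real.hasDerivAt_cosh x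
  have h2 : HasDerivAt Real.sinh (Real.cosh x) x := Real.hasDerivAt_sinh x
  have hdiv : HasDerivAt (fun x => Real.cosh x / Real.sinh x)
      ((Real.sinh x * Real.sinh x - Real.cosh x * Real.cosh x) / (Real.sinh x)^2) x :=
    h1.div h2 hs
  simpa [mul_comm] using (hasDerivAt_id x).fun_mul hdiv

lemma h2_strictMono : StrictMonoOn (fun x => x * (Real.cosh x / Real.sinh x)) (Set.Ioi (0:ℝ)) := by
  have : ∀ x ∈ interior (Set.Ioi (0:ℝ)),
      0 < deriv (fun x => x * (Real.cosh x / Real.sinh x)) x := by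
    intro x hx
    rw [interior_Ioi] at hx
    have hx : 0 < x := hx
    have hs : 0 < Real.sinh x := Real.sinh_pos_iff.2 hx
    rw [(h2_hasDerivAt hx).deriv]
    have hkey : x < Real.sinh x * Real.cosh x := by
      have := Real.self_lt_sinh_iff.2 (by linarith : 0 < 2*x)
      rw [show (2:ℝ)*x = x + x by ring, Real.sinh_add] at this
      nlinarith
    have hid : Real.cosh x * Real.cosh x - Real.sinh x * Real.sinh x = 1 := by
      have := Real.cosh_sq_sub_sinh_sq x
      nlinarith
    rw [show Real.cosh x / Real.sinh x + x * ((Real.sinh x * Real.sinh x - Real.cosh x * Real.cosh x) / (Real.sinh x)^2) = (Real.sinh x * Real.cosh x - x)/(Real.sinh x)^2 from by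
      field_simp
      linear_combination (-x) * hid]
    apply div_pos
    · linarith
    · positivity
  exact strictMonoOn_of_deriv_pos (convex_Ioi 0)
    (fun x hx => ((h2_hasDerivAt hx).continuousAt).continuousWithinAt) this

theorem H2_strictMono (hinv : ℝ → ℝ)
    (h_left : ∀ x > (0:ℝ), hinv (x * (Real.cosh x / Real.sinh x)) = x)
    (h_right : ∀ y ∈ Set.Ioi (1:ℝ),
      hinv y > 0 ∧ hinv y * (Real.cosh (hinv y) / Real.sinh (hinv y)) = y) :
    StrictMonoOn (fun y => hinv y / y) (Set.Ioi 1) := by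
  intro y₁ hy₁ y₂ hy₂ hlt
  obtain ⟨hx₁, he₁⟩ := h_right y₁ hy₁
  obtain ⟨hx₂, he₂⟩ := h_right y₂ hy₂
  set x₁ := hinv y₁
  set x₂ := hinv y₂
  have hlt' : x₁ < x₂ := by
    by_contra h
    push_neg at h
    have := h2_strictMono.le_iff_le (Set.mem_Ioi.2 hx₂) (Set.mem_Ioi.2 hx₁) |>.2 h
    simp only [he₁, he₂] at this
    linarith
  have hs₁ : 0 < Real.sinh x₁ := Real.sinh_pos_iff.2 hx₁
  have hs₂ : 0 < Real.sinh x₂ := Real.sinh_pos_iff.2 hx₂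
  have hc₁ : 0 < Real.cosh x₁ := Real.cosh_pos x₁
  have hc₂ : 0 < Real.cosh x₂ := Real.cosh_pos x₂
  have hy₁' : (0:ℝ) < y₁ := lt_trans one_pos hy₁
  have hy₂' : (0:ℝ) < y₂ := lt_trans one_pos hy₂
  have e₁ : x₁ / y₁ = Real.sinh x₁ / Real.cosh x₁ := by
    rw [← he₁]; field_simp
  have e₂ : x₂ / y₂ = Real.sinh x₂ / Real.cosh x₂ := by
    rw [← he₂]; field_simp
  show x₁ / y₁ < x₂ / y₂
  simp only [e₁, e₂]
  rw [div_lt_div_iff₀ hc₁ hc₂]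
  have : Real.sinh (x₁ - x₂) < Real.sinh 0 := Real.sinh_lt_sinh.2 (by linarith)
  rw [Real.sinh_sub, Real.sinh_zero] at this
  nlinarith
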